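/- The linear functional τ(f) = ∫_ℝ f₀(u) du on the noncommutative cylinder algebra is a trace: τ(f •_ℏ g) = τ(g •_ℏ f) for all f, g. -/

import Mathlib

open MeasureTheory

/-- The twisted product `(f • g)_n(u) = ∑_k f_k(u) g_{n-k}(u + kℏ)`. -/
noncomputable def ncProd (ℏ : ℝ) (f g : ℤ → ℝ → ℂ) : ℤ → ℝ → ℂ :=
  fun n u => ∑' k : ℤ, f k u * g (n - k) (u + k * ℏ)

/-- The trace `τ(f) = ∫_ℝ f₀(u) du`. -/
noncomputable def tau (f : ℤ → ℝ → ℂ) : ℂ := ∫ u : ℝ, f 0 u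

private lemma mul_integrable (φ ψ : SchwartzMap ℝ ℂ) (c : ℝ) :
    Integrable (fun u : ℝ => φ u * ψ (u + c)) := by
  have h := Integrable.bdd_mul (f := fun u : ℝ => ψ (u + c)) (g := fun u : ℝ => φ u)
    (φ.integrable (μ := volume))
    ((ψ.continuous.comp (continuous_id.add continuous_const)).aestronglyMeasurable)
    (c := SchwartzMap.seminorm ℝ 0 0 ψ) (Filter.Eventually.of_forall fun x => ψ.norm_le_seminorm ℝ (x + c))
  simpa [mul_comm] using h

/-- `τ` is a trace: `τ(f •_ℏ g) = τ(g •_ℏ f)`. -/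
theorem tau_trace (ℏ : ℝ) (f g : ℤ → SchwartzMap ℝ ℂ)
    (hf : (Function.support f).Finite) (hg : (Function.support g).Finite) :
    tau (ncProd ℏ (fun n => ⇑(f n)) (fun n => ⇑(g n))) =
      tau (ncProd ℏ (fun n => ⇑(g n)) (fun n => ⇑(f n))) := by
  classical
  set S : Finset ℤ := hf.toFinset ∪ hg.toFinset.image Neg.neg with hS
  set S' : Finset ℤ := S.image Neg.neg with hS'
  -- left side
  have h1 : ∀ u : ℝ, (∑' k : ℤ, f k u * g (0 - k) (u + k * ℏ))
      = ∑ k ∈ S, f k u * g (0 - k) (u + k * ℏ) := by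
    intro u
    refine tsum_eq_sum ?_
    intro k hk
    have : f k = 0 := by
      by_contra h
      exact hk (Finset.mem_union_left _ (hf.mem_toFinset.2 h))
    simp [this]
  -- right side
  have h2 : ∀ u : ℝ, (∑' k : ℤ, g k u * f (0 - k) (u + k * ℏ))
      = ∑ k ∈ S', g k u * f (0 - k) (u + k * ℏ) := by
    intro u
    refine tsum_eq_sum ?_
    intro k hk
    have : g k = 0 := by
      by_contra h
      apply hk
      rw [hS', hS]
      refine Finset.mem_image.2 ⟨-k, ?_, by simp⟩
      exact Finset.mem_union_right _
        (Finset.mem_image.2 ⟨k, hg.mem_toFinset.2 h, rfl⟩)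
    simp [this]
  simp only [tau, ncProd]
  rw [show (fun u : ℝ => ∑' k : ℤ, f k u * g (0 - k) (u + k * ℏ))
      = fun u => ∑ k ∈ S, f k u * g (0 - k) (u + k * ℏ) from funext h1,
    show (fun u : ℝ => ∑' k : ℤ, g k u * f (0 - k) (u + k * ℏ))
      = fun u => ∑ k ∈ S', g k u * f (0 - k) (u + k * ℏ) from funext h2]
  rw [integral_finset_sum S (fun k _ => by
      simpa using mul_integrable (f k) (g (0 - k)) (k * ℏ)),
    integral_finset_sum S' (fun k _ => by
      simpa using mul_integrable (g k) (f (0 - k)) (k * ℏ))]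
  rw [hS', Finset.sum_image (fun a _ b _ h => neg_injective h)]
  refine Finset.sum_congr rfl ?_
  intro k _
  -- ∫ f k u * g (-k) (u + kℏ) = ∫ g (-k) u * f k (u + (-k)ℏ)
  have key := integral_add_right_eq_self (μ := volume)
    (fun u : ℝ => g (-k) u * f k (u + (-k : ℤ) * ℏ)) ((k : ℝ) * ℏ)
  simp only [Int.cast_neg, neg_mul] at key
  rw [show ((0 : ℤ) - k) = -k by ring, show ((0 : ℤ) - -k) = k by ring]
  simp only [Int.cast_neg, neg_mul]
  rw [← key]
  congr 1
  funext u
  rw [mul_comm]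
  congr 2
  ring
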